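/- Fix partitions α, β. The colRSK local rule is a bijection from the set {(κ, G) : κ a partition with α ≻ κ ≺ β, G ∈ ℕ} onto the set {ν : ν a partition with α ≺ ν ≻ β}, with inverse given by the colRSK⁻¹ algorithm: G_1 = max(α_1, β_1) − ν_1, κ_s = max(min(α_s, β_s) − G_s, ν_{s+1}), G_{s+1} = ν_{s+1} + G_s − max(α_{s+1}, β_{s+1}) − min(α_s, β_s) + κ_s. -/

import Mathlib

open scoped Classical

noncomputable section

/-! ## Partitions and interlacing -/

def IsPartition (a : ℕ → ℕ) : Prop :=
  (∀ i, a (i + 1) ≤ a i) ∧ ∃ N, ∀ i, N ≤ i → a i = 0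

/-- `Interlaces μ lam` means μ ≺ lam, i.e. lam_{i+1} ≤ μ_i ≤ lam_i (0-indexed). -/
def Interlaces (μ lam : ℕ → ℕ) : Prop :=
  ∀ i, lam (i + 1) ≤ μ i ∧ μ i ≤ lam i

def psum (a : ℕ → ℕ) : ℕ := ∑' i, a i

def plen (a : ℕ → ℕ) : ℕ := sInf {N | ∀ i, N ≤ i → a i = 0}

/-! ## rowRSK local rule -/

def rowRSK (α β κ : ℕ → ℕ) (G : ℕ) : ℕ → ℕ
  | 0 => max (α 0) (β 0) + G
  | s + 1 => max (α (s + 1)) (β (s + 1)) + min (α s) (β s) - κ s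

/-! ## colRSK local rule -/

def Gdesc (α β κ : ℕ → ℕ) (G L : ℕ) : ℕ → ℕ
  | 0 => G
  | k + 1 =>
      Gdesc α β κ G L k -
          min (Gdesc α β κ G L k) (κ (L - (k + 1)) - max (α (L - (k + 1) + 1)) (β (L - (k + 1) + 1)))
        + (min (α (L - (k + 1))) (β (L - (k + 1))) - κ (L - (k + 1)))

def colG (α β κ : ℕ → ℕ) (G s : ℕ) : ℕ :=
  Gdesc α β κ G (min (plen α) (plen β)) (min (plen α) (plen β) - s)

def colRSK (α β κ : ℕ → ℕ) (G : ℕ) : ℕ → ℕ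
  | 0 => max (α 0) (β 0) + colG α β κ G 0
  | s + 1 => min (max (α (s + 1)) (β (s + 1)) + colG α β κ G (s + 1)) (κ s)

def colGi (α β ν : ℕ → ℕ) : ℕ → ℕ
  | 0 => ν 0 - max (α 0) (β 0)
  | s + 1 =>
      ν (s + 1) + colGi α β ν s + max (min (α s) (β s) - colGi α β ν s) (ν (s + 1))
        - max (α (s + 1)) (β (s + 1)) - min (α s) (β s)

def colKinv (α β ν : ℕ → ℕ) (s : ℕ) : ℕ :=
  max (min (α s) (β s) - colGi α β ν s) (ν (s + 1))

def colGout (α β ν : ℕ → ℕ) : ℕ := colGi α β ν (min (plen α) (plen β))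

/-! ## Statements 0,1,2 -/

instance : TopologicalSpace (MvPowerSeries (Fin 2) ℚ) :=
  (inferInstance : TopologicalSpace ((Fin 2 →₀ ℕ) → ℚ))

def IsGT (n : ℕ) (z : ℕ → ℕ → ℕ) : Prop :=
  (∀ i j, n ≤ i ∨ i < j → z i j = 0) ∧
  (∀ i j, i + 1 < n → j ≤ i → z (i + 1) (j + 1) ≤ z i j ∧ z i j ≤ z (i + 1) j)

def gtType (z : ℕ → ℕ → ℕ) (i : ℕ) : ℕ :=
  (∑ j ∈ Finset.range (i + 1), z i j) - ∑ j ∈ Finset.range i, z (i - 1) j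

def hpolyN (n k : ℕ) : MvPolynomial ℕ ℚ :=
  ∑ f ∈ Finset.univ.filter (fun f : Fin k → Fin n => Monotone f),
    ∏ j : Fin k, MvPolynomial.X ((f j : ℕ) + 1)

def hZN (n : ℕ) (e : ℤ) : MvPolynomial ℕ ℚ := if 0 ≤ e then hpolyN n e.toNat else 0

def schurN (n : ℕ) (μ : YoungDiagram) : MvPolynomial ℕ ℚ :=
  Matrix.det (Matrix.of fun i j : Fin (μ.colLen 0) =>
    hZN n ((μ.rowLen (i : ℕ) : ℤ) - ((i : ℕ) : ℤ) + ((j : ℕ) : ℤ)))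

abbrev LP : Type := AddMonoidAlgebra ℚ (ℕ →₀ ℤ)

def lpX (i : ℕ) (e : ℤ) : LP := AddMonoidAlgebra.single (Finsupp.single i e) 1

def hListLP (l : List LP) (k : ℕ) : LP :=
  ∑ f ∈ Finset.univ.filter (fun f : Fin k → Fin l.length => Monotone f),
    ∏ j : Fin k, l.get (f j)

def hZLP (l : List LP) (e : ℤ) : LP := if 0 ≤ e then hListLP l e.toNat else 0

def varsSp (n : ℕ) : List LP := (List.range n).flatMap fun i => [lpX (i + 1) 1, lpX (i + 1) (-1)]

def varsSO (n : ℕ) : List LP := varsSp n ++ [1]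

def varsS (n : ℕ) : List LP := (List.range n).map fun i => lpX (i + 1) 1

def spChar (n : ℕ) (lam : ℕ → ℕ) : LP :=
  (1 / 2 : ℚ) • Matrix.det (Matrix.of fun i j : Fin n =>
    hZLP (varsSp n) ((lam (i : ℕ) : ℤ) - ((i : ℕ) : ℤ) + ((j : ℕ) : ℤ)) +
      hZLP (varsSp n) ((lam (i : ℕ) : ℤ) - ((i : ℕ) : ℤ) - ((j : ℕ) : ℤ)))

def soChar (n : ℕ) (lam : ℕ → ℕ) : LP :=
  Matrix.det (Matrix.of fun i j : Fin n =>
    hZLP (varsSO n) ((lam (i : ℕ) : ℤ) - ((i : ℕ) : ℤ) + ((j : ℕ) : ℤ)) -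
      hZLP (varsSO n) ((lam (i : ℕ) : ℤ) - ((i : ℕ) : ℤ) - ((j : ℕ) : ℤ) - 2))

def schurLP (n : ℕ) (lam : ℕ → ℕ) : LP :=
  Matrix.det (Matrix.of fun i j : Fin n =>
    hZLP (varsS n) ((lam (i : ℕ) : ℤ) - ((i : ℕ) : ℤ) + ((j : ℕ) : ℤ)))

def rect (n v : ℕ) : ℕ → ℕ := fun i => if i < n then v else 0

def UpRight (p : ℕ → ℕ × ℕ) (m : ℕ) : Prop :=
  ∀ k < m, p (k + 1) = ((p k).1 + 1, (p k).2) ∨ p (k + 1) = ((p k).1, (p k).2 + 1)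

def domP2PR (n : ℕ) : Finset (ℕ × ℕ) :=
  (Finset.Icc 1 n ×ˢ Finset.Icc 1 n).filter fun q => q.2 ≤ q.1

def wtP2PR (n : ℕ) (W : ℕ × ℕ → ℕ) : MvPolynomial ℕ ℚ :=
  ∏ q ∈ domP2PR n,
    (if q.1 = q.2 then MvPolynomial.X q.1 else MvPolynomial.X q.1 * MvPolynomial.X q.2) ^ W q

def PathP2PR (n : ℕ) (p : ℕ → ℕ × ℕ) : Prop :=
  p 0 = (1, 1) ∧ p (2 * n - 2) = (n, n) ∧ UpRight p (2 * n - 2) ∧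
    ∀ k ≤ 2 * n - 2, p k ∈ domP2PR n

def WsetP2PR (n u : ℕ) : Set ((ℕ × ℕ) → ℕ) :=
  {W | (∀ q ∉ domP2PR n, W q = 0) ∧
    ∀ p, PathP2PR n p → ∑ k ∈ Finset.range (2 * n - 1), W (p k) ≤ u}

def domP2L (n : ℕ) : Finset (ℕ × ℕ) :=
  (Finset.Icc 1 n ×ˢ Finset.Icc 1 n).filter fun q => q.1 + q.2 ≤ n + 1

def wtP2L (n : ℕ) (W : ℕ × ℕ → ℕ) : MvPolynomial ℕ ℚ :=
  ∏ q ∈ domP2L n, (MvPolynomial.X q.1 * MvPolynomial.X (n - q.2 + 1)) ^ W q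

def PathP2L (n : ℕ) (p : ℕ → ℕ × ℕ) : Prop :=
  p 0 = (1, 1) ∧ (p (n - 1)).1 + (p (n - 1)).2 = n + 1 ∧ UpRight p (n - 1) ∧
    ∀ k ≤ n - 1, p k ∈ domP2L n

def WsetP2L (n v : ℕ) : Set ((ℕ × ℕ) → ℕ) :=
  {W | (∀ q ∉ domP2L n, W q = 0) ∧
    ∀ p, PathP2L n p → ∑ k ∈ Finset.range n, W (p k) ≤ v}

def domP2HLR (n : ℕ) : Finset (ℕ × ℕ) :=
  (Finset.Icc 1 n ×ˢ Finset.Icc 1 (2 * n)).filter fun q => q.1 ≤ q.2 ∧ q.1 + q.2 ≤ 2 * n + 1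

def rowVar (n j : ℕ) : ℕ := if j ≤ n then j else 2 * n + 1 - j

def wtP2HLR (n : ℕ) (W : ℕ × ℕ → ℕ) : MvPolynomial ℕ ℚ :=
  ∏ q ∈ domP2HLR n,
    (if q.1 = q.2 then MvPolynomial.X q.1
      else MvPolynomial.X q.1 * MvPolynomial.X (rowVar n q.2)) ^ W q

def PathP2HLR (n : ℕ) (p : ℕ → ℕ × ℕ) : Prop :=
  p 0 = (1, 1) ∧ (p (2 * n - 1)).1 + (p (2 * n - 1)).2 = 2 * n + 1 ∧ UpRight p (2 * n - 1) ∧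
    ∀ k ≤ 2 * n - 1, p k ∈ domP2HLR n

def WsetP2HLR (n u : ℕ) : Set ((ℕ × ℕ) → ℕ) :=
  {W | (∀ q ∉ domP2HLR n, W q = 0) ∧
    ∀ p, PathP2HLR n p → ∑ k ∈ Finset.range (2 * n), W (p k) ≤ u}

def wtP2HLRlp (n : ℕ) (W : ℕ × ℕ → ℕ) : LP :=
  ∏ q ∈ domP2HLR n,
    (if q.1 = q.2 then lpX q.1 1 else lpX q.1 1 * lpX (rowVar n q.2) 1) ^ W q

def growRow (w : ℕ → ℕ → ℕ) : ℕ → ℕ → ℕ → ℕ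
  | 0, _ => fun _ => 0
  | _ + 1, 0 => fun _ => 0
  | i + 1, j + 1 =>
      rowRSK (growRow w i (j + 1)) (growRow w (i + 1) j) (growRow w i j) (w (i + 1) (j + 1))
  termination_by i j => (i, j)

def growCol (w : ℕ → ℕ → ℕ) : ℕ → ℕ → ℕ → ℕ
  | 0, _ => fun _ => 0
  | _ + 1, 0 => fun _ => 0
  | i + 1, j + 1 =>
      colRSK (growCol w i (j + 1)) (growCol w (i + 1) j) (growCol w i j) (w (i + 1) (j + 1))
  termination_by i j => (i, j)

lemma plen_zero {a : ℕ → ℕ} (h : IsPartition a) {i : ℕ} (hi : plen a ≤ i) : a i = 0 := by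
  obtain ⟨N, hN⟩ := h.2
  have hmem : plen a ∈ {N | ∀ i, N ≤ i → a i = 0} := Nat.sInf_mem ⟨N, hN⟩
  exact hmem i hi

lemma min_zero_of_le {α β : ℕ → ℕ} (hα : IsPartition α) (hβ : IsPartition β) {s : ℕ}
    (hs : min (plen α) (plen β) ≤ s) : min (α s) (β s) = 0 := by
  rcases min_le_iff.mp hs with h | h
  · simp [plen_zero hα h]
  · simp [plen_zero hβ h]

lemma colG_stable (α β κ : ℕ → ℕ) (G : ℕ) {s : ℕ} (hs : min (plen α) (plen β) ≤ s) :
    colG α β κ G s = G := by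
  unfold colG
  rw [Nat.sub_eq_zero_of_le hs]
  rfl

lemma colG_rec (α β κ : ℕ → ℕ) (G : ℕ) {s : ℕ} (hs : s < min (plen α) (plen β)) :
    colG α β κ G s =
      colG α β κ G (s + 1) -
          min (colG α β κ G (s + 1)) (κ s - max (α (s + 1)) (β (s + 1)))
        + (min (α s) (β s) - κ s) := by
  unfold colG
  have h1 : min (plen α) (plen β) - s = (min (plen α) (plen β) - (s + 1)) + 1 := by omega
  rw [h1]
  have h2 : min (plen α) (plen β) - ((min (plen α) (plen β) - (s + 1)) + 1) = s := by omega
  rw [Gdesc, h2]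

lemma fwd_g (α β κ : ℕ → ℕ) (G : ℕ) (hκα : Interlaces κ α) (hκβ : Interlaces κ β) :
    ∀ s ≤ min (plen α) (plen β), colGi α β (colRSK α β κ G) s = colG α β κ G s := by
  intro s
  induction s with
  | zero =>
    intro _
    show colRSK α β κ G 0 - max (α 0) (β 0) = colG α β κ G 0
    rw [show colRSK α β κ G 0 = max (α 0) (β 0) + colG α β κ G 0 from rfl]
    omega
  | succ s ih =>
    intro hs1
    have hs : s < min (plen α) (plen β) := hs1
    have IH := ih (le_of_lt hs)
    have hrec := colG_rec α β κ G hs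
    have hν : colRSK α β κ G (s + 1) =
        min (max (α (s + 1)) (β (s + 1)) + colG α β κ G (s + 1)) (κ s) := rfl
    have h1 := (hκα s).1; have h2 := (hκα s).2
    have h3 := (hκβ s).1; have h4 := (hκβ s).2
    show colRSK α β κ G (s + 1) + colGi α β (colRSK α β κ G) s +
        max (min (α s) (β s) - colGi α β (colRSK α β κ G) s) (colRSK α β κ G (s + 1))
        - max (α (s + 1)) (β (s + 1)) - min (α s) (β s) = colG α β κ G (s + 1)
    rw [IH, hν]
    omega

lemma fwd_kinv (α β κ : ℕ → ℕ) (G : ℕ) (hα : IsPartition α) (hβ : IsPartition β)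
    (hκα : Interlaces κ α) (hκβ : Interlaces κ β) :
    ∀ s, colKinv α β (colRSK α β κ G) s = κ s := by
  intro s
  have hν : colRSK α β κ G (s + 1) =
      min (max (α (s + 1)) (β (s + 1)) + colG α β κ G (s + 1)) (κ s) := rfl
  have h1 := (hκα s).1; have h2 := (hκα s).2
  have h3 := (hκβ s).1; have h4 := (hκβ s).2
  unfold colKinv
  rcases lt_or_ge s (min (plen α) (plen β)) with hs | hs
  · rw [fwd_g α β κ G hκα hκβ s (le_of_lt hs), hν]
    have hrec := colG_rec α β κ G hs
    omega
  · have hm : min (α s) (β s) = 0 := min_zero_of_le hα hβ hs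
    rw [hν]
    omega

lemma colGi_succ (α β ν : ℕ → ℕ) (s : ℕ) :
    colGi α β ν (s + 1) =
      ν (s + 1) + colGi α β ν s + max (min (α s) (β s) - colGi α β ν s) (ν (s + 1))
        - max (α (s + 1)) (β (s + 1)) - min (α s) (β s) := rfl

lemma bwd_g (α β ν : ℕ → ℕ) (hαν : Interlaces α ν) (hβν : Interlaces β ν) :
    ∀ k ≤ min (plen α) (plen β),
      colG α β (colKinv α β ν) (colGout α β ν) (min (plen α) (plen β) - k) =
        colGi α β ν (min (plen α) (plen β) - k) := by
  intro k
  induction k with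
  | zero =>
    intro _
    rw [Nat.sub_zero, colG_stable α β _ _ le_rfl]
    rfl
  | succ k ih =>
    intro hk1
    have IH := ih (le_of_lt hk1)
    set L := min (plen α) (plen β) with hL
    set s := L - (k + 1) with hsdef
    have hs : s < L := by omega
    have hs1 : s + 1 = L - k := by omega
    rw [← hs1] at IH
    rw [colG_rec α β _ _ hs, IH]
    have hg := colGi_succ α β ν s
    have hκ : colKinv α β ν s = max (min (α s) (β s) - colGi α β ν s) (ν (s + 1)) := rfl
    have h1 := (hαν s).1; have h2 := (hαν (s + 1)).2
    have h3 := (hβν s).1; have h4 := (hβν (s + 1)).2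
    rw [hκ]
    omega

lemma bwd_recon (α β ν : ℕ → ℕ) (hα : IsPartition α) (hβ : IsPartition β)
    (hαν : Interlaces α ν) (hβν : Interlaces β ν) :
    colRSK α β (colKinv α β ν) (colGout α β ν) = ν := by
  set L := min (plen α) (plen β) with hL
  funext t
  match t with
  | 0 =>
    show max (α 0) (β 0) + colG α β (colKinv α β ν) (colGout α β ν) 0 = ν 0
    have h0 : colG α β (colKinv α β ν) (colGout α β ν) (L - L) = colGi α β ν (L - L) :=
      bwd_g α β ν hαν hβν L le_rfl
    rw [Nat.sub_self] at h0
    rw [h0]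
    have hg0 : colGi α β ν 0 = ν 0 - max (α 0) (β 0) := rfl
    have h2 := (hαν 0).2; have h4 := (hβν 0).2
    omega
  | s + 1 =>
    show min (max (α (s + 1)) (β (s + 1)) + colG α β (colKinv α β ν) (colGout α β ν) (s + 1))
        (colKinv α β ν s) = ν (s + 1)
    have hκ : colKinv α β ν s = max (min (α s) (β s) - colGi α β ν s) (ν (s + 1)) := rfl
    have h1 := (hαν s).1; have h2 := (hαν (s + 1)).2
    have h3 := (hβν s).1; have h4 := (hβν (s + 1)).2
    rcases le_or_gt (s + 1) L with hs | hs
    · have hc : colG α β (colKinv α β ν) (colGout α β ν) (L - (L - (s + 1))) =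
          colGi α β ν (L - (L - (s + 1))) := bwd_g α β ν hαν hβν (L - (s + 1)) (by omega)
      rw [show L - (L - (s + 1)) = s + 1 by omega] at hc
      rw [hc, colGi_succ, hκ]
      omega
    · have hm : min (α s) (β s) = 0 := min_zero_of_le hα hβ (by omega)
      rw [hκ]
      omega

lemma fwd_mem (α β κ : ℕ → ℕ) (G : ℕ) (hα : IsPartition α) (hβ : IsPartition β)
    (hκ : IsPartition κ) (hκα : Interlaces κ α) (hκβ : Interlaces κ β) :
    IsPartition (colRSK α β κ G) ∧ Interlaces α (colRSK α β κ G) ∧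
      Interlaces β (colRSK α β κ G) := by
  set ν := colRSK α β κ G with hνdef
  have hν0 : ν 0 = max (α 0) (β 0) + colG α β κ G 0 := rfl
  have hνs : ∀ s, ν (s + 1) =
      min (max (α (s + 1)) (β (s + 1)) + colG α β κ G (s + 1)) (κ s) := fun s => rfl
  have key : ∀ i, α i ≤ ν i ∧ β i ≤ ν i := by
    intro i
    match i with
    | 0 => rw [hν0]; omega
    | j + 1 =>
      have h1 := (hκα j).1; have h3 := (hκβ j).1
      rw [hνs j]; omega
  have keyup : ∀ i, ν (i + 1) ≤ α i ∧ ν (i + 1) ≤ β i := by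
    intro i
    have h2 := (hκα i).2; have h4 := (hκβ i).2
    rw [hνs i]; omega
  refine ⟨⟨?_, ?_⟩, fun i => ⟨(keyup i).1, (key i).1⟩, fun i => ⟨(keyup i).2, (key i).2⟩⟩
  · intro i
    have := (keyup i).1
    have := (key i).1
    omega
  · refine ⟨min (plen α) (plen β) + 1, ?_⟩
    intro i hi
    match i, hi with
    | s + 1, hi =>
      have hm : min (α s) (β s) = 0 := min_zero_of_le hα hβ (by omega)
      have h2 := (hκα s).2; have h4 := (hκβ s).2
      rw [hνs s]; omega

lemma bwd_mem (α β ν : ℕ → ℕ) (hα : IsPartition α) (hβ : IsPartition β)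
    (hν : IsPartition ν) (hαν : Interlaces α ν) (hβν : Interlaces β ν) :
    IsPartition (colKinv α β ν) ∧ Interlaces (colKinv α β ν) α ∧
      Interlaces (colKinv α β ν) β := by
  have hκ : ∀ s, colKinv α β ν s = max (min (α s) (β s) - colGi α β ν s) (ν (s + 1)) :=
    fun s => rfl
  have key : ∀ s, max (α (s + 1)) (β (s + 1)) ≤ colKinv α β ν s ∧
      colKinv α β ν s ≤ min (α s) (β s) := by
    intro s
    have h1 := (hαν s).1; have h2 := (hαν (s + 1)).2
    have h3 := (hβν s).1; have h4 := (hβν (s + 1)).2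
    rw [hκ s]; omega
  refine ⟨⟨?_, ?_⟩, fun i => ⟨le_trans (le_max_left _ _) (key i).1,
      le_trans (key i).2 (min_le_left _ _)⟩,
    fun i => ⟨le_trans (le_max_right _ _) (key i).1,
      le_trans (key i).2 (min_le_right _ _)⟩⟩
  · intro i
    have ha := (key (i + 1)).2
    have hb := (key i).1
    have := min_le_max (a := α (i + 1)) (b := β (i + 1))
    omega
  · refine ⟨min (plen α) (plen β), ?_⟩
    intro s hs
    have hm : min (α s) (β s) = 0 := min_zero_of_le hα hβ hs
    have := (key s).2
    omega

open Filter MeasureTheory in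

theorem stmt5 (α β : ℕ → ℕ) (hα : IsPartition α) (hβ : IsPartition β) :
    Set.BijOn (fun p : (ℕ → ℕ) × ℕ => colRSK α β p.1 p.2)
      {p | IsPartition p.1 ∧ Interlaces p.1 α ∧ Interlaces p.1 β}
      {ν | IsPartition ν ∧ Interlaces α ν ∧ Interlaces β ν} ∧
    Set.InvOn (fun ν => (colKinv α β ν, colGout α β ν))
      (fun p : (ℕ → ℕ) × ℕ => colRSK α β p.1 p.2)
      {p | IsPartition p.1 ∧ Interlaces p.1 α ∧ Interlaces p.1 β}
      {ν | IsPartition ν ∧ Interlaces α ν ∧ Interlaces β ν} := by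
  have hmapsF : Set.MapsTo (fun p : (ℕ → ℕ) × ℕ => colRSK α β p.1 p.2)
      {p | IsPartition p.1 ∧ Interlaces p.1 α ∧ Interlaces p.1 β}
      {ν | IsPartition ν ∧ Interlaces α ν ∧ Interlaces β ν} := by
    rintro ⟨κ, G⟩ ⟨hκ, hκα, hκβ⟩
    exact fwd_mem α β κ G hα hβ hκ hκα hκβ
  have hmapsB : Set.MapsTo (fun ν => (colKinv α β ν, colGout α β ν))
      {ν | IsPartition ν ∧ Interlaces α ν ∧ Interlaces β ν}
      {p | IsPartition p.1 ∧ Interlaces p.1 α ∧ Interlaces p.1 β} := by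
    rintro ν ⟨hν, hαν, hβν⟩
    exact bwd_mem α β ν hα hβ hν hαν hβν
  have hinv : Set.InvOn (fun ν => (colKinv α β ν, colGout α β ν))
      (fun p : (ℕ → ℕ) × ℕ => colRSK α β p.1 p.2)
      {p | IsPartition p.1 ∧ Interlaces p.1 α ∧ Interlaces p.1 β}
      {ν | IsPartition ν ∧ Interlaces α ν ∧ Interlaces β ν} := by
    constructor
    · rintro ⟨κ, G⟩ ⟨hκ, hκα, hκβ⟩
      have h1 : colKinv α β (colRSK α β κ G) = κ :=
        funext (fwd_kinv α β κ G hα hβ hκα hκβ)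
      have h2 : colGout α β (colRSK α β κ G) = G := by
        have := fwd_g α β κ G hκα hκβ (min (plen α) (plen β)) le_rfl
        rw [colG_stable α β κ G le_rfl] at this
        exact this
      simp only [Prod.mk.injEq]
      exact ⟨h1, h2⟩
    · rintro ν ⟨hν, hαν, hβν⟩
      exact bwd_recon α β ν hα hβ hαν hβν
  exact ⟨hinv.bijOn hmapsF hmapsB, hinv⟩

/-! ## Gelfand–Tsetlin patterns, statements 6,7 -/


end
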